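/- Let s ≤ t and let r ≥ 0. The graph G(r) := K_{s-1} × (disjoint union of r copies of K_t), the join of a clique on s−1 vertices with r disjoint t-cliques, does not contain K_{s,t} as a subgraph, has s−1+rt vertices, and has exactly C(s−1,2) + (s−1+(t−1)/2)·rt edges, i.e. C(s−1,2) + (s−1)rt + r·C(t,2). -/

import Mathlib

open SimpleGraph

/-- The join (product) of two graphs: disjoint union plus all cross edges. -/
def gJoin {α β : Type*} (G : SimpleGraph α) (H : SimpleGraph β) : SimpleGraph (α ⊕ β) where
  Adj u v := match u, v with
    | Sum.inl a, Sum.inl b => G.Adj a b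
    | Sum.inr a, Sum.inr b => H.Adj a b
    | _, _ => True
  symm := by constructor; rintro (a|a) (b|b) h <;> simp_all <;> exact h.symm
  loopless := by
    constructor
    rintro (a|a) h
    · exact G.irrefl h
    · exact H.irrefl h

/-- `H` is contained in `G` as a (not necessarily induced) subgraph. -/
def Contains {β α : Type*} (H : SimpleGraph β) (G : SimpleGraph α) : Prop :=
  ∃ f : H →g G, Function.Injective f

/-- The complete bipartite graph `K_{s,t}`. -/
def KBip (s t : ℕ) : SimpleGraph (Fin s ⊕ Fin t) := completeBipartiteGraph (Fin s) (Fin t)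

/-- A cograph: a graph with no induced path on four vertices. -/
def IsCograph {α : Type*} (G : SimpleGraph α) : Prop :=
  IsEmpty (pathGraph 4 ↪g G)

/-- The disjoint union of r copies of the clique K_t. -/
def manyCliques (r t : ℕ) : SimpleGraph (Fin r × Fin t) where
  Adj x y := x.1 = y.1 ∧ x ≠ y
  symm := by constructor; rintro x y ⟨h1, h2⟩; exact ⟨h1.symm, h2.symm⟩
  loopless := by constructor; rintro x ⟨h1, h2⟩; exact h2 rfl

section Aux

variable {α β : Type*} (G : SimpleGraph α) (H : SimpleGraph β)

lemma gJoin_adj_ll {a b : α} : (gJoin G H).Adj (Sum.inl a) (Sum.inl b) ↔ G.Adj a b := Iff.rfl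
lemma gJoin_adj_lr (a : α) (b : β) : (gJoin G H).Adj (Sum.inl a) (Sum.inr b) := trivial
lemma gJoin_adj_rr {a b : β} : (gJoin G H).Adj (Sum.inr a) (Sum.inr b) ↔ H.Adj a b := Iff.rfl

/-- Neighbor set of a left vertex in a join. -/
def gJoinNbrL (a : α) : ((gJoin G H).neighborSet (Sum.inl a)) ≃ (G.neighborSet a ⊕ β) where
  toFun := fun x => match x with
    | ⟨Sum.inl b, h⟩ => Sum.inl ⟨b, h⟩
    | ⟨Sum.inr b, _⟩ => Sum.inr b
  invFun := fun x => match x with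
    | Sum.inl ⟨b, h⟩ => ⟨Sum.inl b, h⟩
    | Sum.inr b => ⟨Sum.inr b, trivial⟩
  left_inv := by rintro ⟨(b|b), h⟩ <;> rfl
  right_inv := by rintro (⟨b, h⟩|b) <;> rfl

/-- Neighbor set of a right vertex in a join. -/
def gJoinNbrR (b : β) : ((gJoin G H).neighborSet (Sum.inr b)) ≃ (α ⊕ H.neighborSet b) where
  toFun := fun x => match x with
    | ⟨Sum.inl a, _⟩ => Sum.inl a
    | ⟨Sum.inr a, h⟩ => Sum.inr ⟨a, h⟩
  invFun := fun x => match x with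
    | Sum.inl a => ⟨Sum.inl a, trivial⟩
    | Sum.inr ⟨a, h⟩ => ⟨Sum.inr a, h⟩
  left_inv := by rintro ⟨(a|a), h⟩ <;> rfl
  right_inv := by rintro (a|⟨a, h⟩) <;> rfl

end Aux

/-- Neighbor set in `manyCliques`. -/
def manyCliquesNbr (r t : ℕ) (w : Fin r × Fin t) :
    ((manyCliques r t).neighborSet w) ≃ {j : Fin t // j ≠ w.2} where
  toFun := fun x => ⟨x.1.2, fun e => x.2.2 (Prod.ext x.2.1 e.symm)⟩
  invFun := fun j => ⟨(w.1, j.1), rfl, fun e => j.2 (congrArg Prod.snd e).symm⟩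
  left_inv := by
    rintro ⟨⟨c, j⟩, h1, h2⟩
    exact Subtype.ext (Prod.ext h1 rfl)
  right_inv := by rintro ⟨j, h⟩; rfl

theorem lower_bound_construction (s t r : ℕ) (hs : 1 ≤ s) (hst : s ≤ t) :
    ¬ Contains (KBip s t) (gJoin (completeGraph (Fin (s - 1))) (manyCliques r t)) ∧
    Nat.card (Fin (s - 1) ⊕ Fin r × Fin t) = s - 1 + r * t ∧
    Nat.card (gJoin (completeGraph (Fin (s - 1))) (manyCliques r t)).edgeSet =
      (s - 1) * (s - 2) / 2 + (s - 1) * (r * t) + r * (t * (t - 1) / 2) := by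
  classical
  set G := gJoin (completeGraph (Fin (s - 1))) (manyCliques r t) with hGdef
  refine ⟨?_, ?_, ?_⟩
  · rintro ⟨f, hf⟩
    have hadj : ∀ (x : Fin s) (z : Fin t), G.Adj (f (Sum.inl x)) (f (Sum.inr z)) := by
      intro x z
      exact f.map_adj (by simp [KBip])
    -- there is a left vertex mapped into the clique part
    have hex : ∃ (x : Fin s) (p : Fin r × Fin t), f (Sum.inl x) = Sum.inr p := by
      by_contra h
      push_neg at h
      have hall : ∀ x : Fin s, ∃ a : Fin (s - 1), f (Sum.inl x) = Sum.inl a := by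
        intro x
        cases hfx : f (Sum.inl x) with
        | inl a => exact ⟨a, rfl⟩
        | inr p => exact absurd hfx (h x p)
      choose g hg using hall
      have hginj : Function.Injective g := by
        intro x y hxy
        have : f (Sum.inl x) = f (Sum.inl y) := by rw [hg x, hg y, hxy]
        exact Sum.inl_injective (hf this)
      have := Fintype.card_le_of_injective g hginj
      simp at this
      omega
    obtain ⟨x, p, hx⟩ := hex
    -- any right vertex mapped into the clique part lands in clique p.1
    have hright : ∀ (z : Fin t) (w : Fin r × Fin t), f (Sum.inr z) = Sum.inr w → w.1 = p.1 := by
      intro z w hw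
      have h := hadj x z
      rw [hx, hw] at h
      exact (h.1).symm
    by_cases hB : ∀ (y : Fin s) (q : Fin r × Fin t), f (Sum.inl y) = Sum.inr q → q.1 = p.1
    · -- all clique images in the same clique: cardinality contradiction
      have hkey : ∀ (u : Fin s ⊕ Fin t) (w : Fin r × Fin t), f u = Sum.inr w → w.1 = p.1 := by
        rintro (y|z) w hw
        · exact hB y w hw
        · exact hright z w hw
      let φ : (Fin (s - 1) ⊕ Fin r × Fin t) → (Fin (s - 1) ⊕ Fin t) := fun v =>
        match v with
        | Sum.inl a => Sum.inl a
        | Sum.inr w => Sum.inr w.2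
      have hinj : Function.Injective (φ ∘ f) := by
        intro u v huv
        apply hf
        cases hu : f u with
        | inl a => cases hv : f v with
          | inl b =>
            simp only [Function.comp_apply, hu, hv, φ] at huv
            exact congrArg Sum.inl (Sum.inl_injective huv)
          | inr w =>
            simp only [Function.comp_apply, hu, hv, φ] at huv
            exact absurd huv (by simp)
        | inr w => cases hv : f v with
          | inl b =>
            simp only [Function.comp_apply, hu, hv, φ] at huv
            exact absurd huv (by simp)
          | inr w' =>
            simp only [Function.comp_apply, hu, hv, φ] at huv
            have h2 : w.2 = w'.2 := Sum.inr_injective huv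
            have h1 : w.1 = w'.1 := by
              rw [hkey u w hu, hkey v w' hv]
            exact congrArg Sum.inr (Prod.ext h1 h2)
      have := Fintype.card_le_of_injective _ hinj
      simp only [Fintype.card_sum, Fintype.card_fin, Fintype.card_prod] at this
      omega
    · -- two left vertices in different cliques: all right vertices go left
      push_neg at hB
      obtain ⟨y, q, hy, hq⟩ := hB
      have hall : ∀ z : Fin t, ∃ a : Fin (s - 1), f (Sum.inr z) = Sum.inl a := by
        intro z
        cases hfz : f (Sum.inr z) with
        | inl a => exact ⟨a, rfl⟩
        | inr w =>
          exfalso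
          have h1 := hright z w hfz
          have h := hadj y z
          rw [hy, hfz] at h
          exact hq (h.1.trans h1)
      choose g hg using hall
      have hginj : Function.Injective g := by
        intro z z' hzz
        have : f (Sum.inr z) = f (Sum.inr z') := by rw [hg z, hg z', hzz]
        exact Sum.inr_injective (hf this)
      have := Fintype.card_le_of_injective g hginj
      simp only [Fintype.card_fin] at this
      omega
  · simp [Nat.card_eq_fintype_card]
  · have hE : Nat.card G.edgeSet = G.edgeFinset.card := by
      rw [Nat.card_eq_fintype_card, ← edgeFinset_card]
    have hsum := G.sum_degrees_eq_twice_card_edges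
    have hdegL : ∀ a : Fin (s - 1), G.degree (Sum.inl a) = (s - 2) + r * t := by
      intro a
      rw [← card_neighborSet_eq_degree]
      rw [Fintype.card_congr (gJoinNbrL (completeGraph (Fin (s - 1))) (manyCliques r t) a)]
      rw [Fintype.card_sum]
      congr 1
      · have e2 : ((completeGraph (Fin (s - 1))).neighborSet a) ≃ {b : Fin (s - 1) // ¬ b = a} :=
          Equiv.subtypeEquivRight (fun b => ⟨fun h e => h e.symm, fun h e => h e.symm⟩)
        rw [Fintype.card_congr e2, Fintype.card_subtype_compl, Fintype.card_subtype_eq,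
          Fintype.card_fin]
        omega
      · simp
    have hdegR : ∀ w : Fin r × Fin t, G.degree (Sum.inr w) = (s - 1) + (t - 1) := by
      intro w
      rw [← card_neighborSet_eq_degree]
      rw [Fintype.card_congr (gJoinNbrR (completeGraph (Fin (s - 1))) (manyCliques r t) w)]
      rw [Fintype.card_sum]
      congr 1
      · simp
      · have e2 : {j : Fin t // j ≠ w.2} ≃ {j : Fin t // ¬ j = w.2} :=
          Equiv.subtypeEquivRight (fun _ => Iff.rfl)
        rw [Fintype.card_congr ((manyCliquesNbr r t w).trans e2), Fintype.card_subtype_compl,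
          Fintype.card_subtype_eq, Fintype.card_fin]
    have h2E : 2 * G.edgeFinset.card
        = (s - 1) * ((s - 2) + r * t) + (r * t) * ((s - 1) + (t - 1)) := by
      rw [← hsum, Fintype.sum_sum_type]
      rw [Finset.sum_congr rfl (fun a _ => hdegL a), Finset.sum_congr rfl (fun w _ => hdegR w)]
      simp [Finset.sum_const, mul_comm]
    obtain ⟨k, hk⟩ := Nat.even_mul_pred_self t
    have hk2 : t * (t - 1) / 2 = k := by omega
    have hX : (s - 1) * (s - 2) = (s - 1) * (s - 1 - 1) := rfl
    obtain ⟨m, hm⟩ := Nat.even_mul_pred_self (s - 1)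
    have hm2 : (s - 1) * (s - 2) = m + m := by rw [hX]; exact hm
    have hexp : (s - 1) * ((s - 2) + r * t) + (r * t) * ((s - 1) + (t - 1))
        = (s - 1) * (s - 2) + 2 * ((s - 1) * (r * t)) + r * (t * (t - 1)) := by
      have ht : (r * t) * (t - 1) = r * (t * (t - 1)) := by ring
      have hst' : (r * t) * (s - 1) = (s - 1) * (r * t) := by ring
      rw [Nat.mul_add, Nat.mul_add, ht, hst']
      ring
    have hrk : r * (t * (t - 1)) = 2 * (r * k) := by rw [hk]; ring
    rw [hexp, hrk, hm2] at h2E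
    rw [hE, hk2, hm2]
    omega
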